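/- Let b(n0) = (10000·n0⁴ + n0·(11n0+1) + 1) + 10·n0²·(n0+1). Then there exists an integer r with 0 ≤ r ≤ n0 such that MAXCUT(G') = b(n0) + (n0+1)·MAXCUT(G) + r. -/

import Mathlib

/-!
STATEMENT 9: with b(n₀) = (10000 n₀⁴ + n₀(11 n₀ + 1) + 1) + 10 n₀²(n₀ + 1),
MAXCUT(G′) = b(n₀) + (n₀+1)·MAXCUT(G) + r for some 0 ≤ r ≤ n₀.
-/
noncomputable section

namespace QAOA

/-- Vertex type of the graph `G'` built from a graph on vertex type `V` of size `n0`: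
gadget vertices `L u i` (`i < n0+1`), `R u i` (`i < 10 n0`), frame vertices
`X i`, `Y i` (`i < 100 n0²`), and the controller `W`. -/
inductive GPV (V : Type) (n0 : ℕ) : Type where
  | L : V → Fin (n0 + 1) → GPV V n0
  | R : V → Fin (10 * n0) → GPV V n0
  | X : Fin (100 * n0 * n0) → GPV V n0
  | Y : Fin (100 * n0 * n0) → GPV V n0
  | W : GPV V n0
  deriving DecidableEq, Fintype

/-- Base relation (one orientation per edge) describing the edges of `G'`. -/
def gpRel {V : Type} [DecidableEq V] (n0 : ℕ) (G : SimpleGraph V) [DecidableRel G.Adj] :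
    GPV V n0 → GPV V n0 → Bool
  | .L u _, .R v _ => u == v
  | .L u i, .L v j => decide (G.Adj u v) && ((i : ℕ) == (j : ℕ))
  | .X _, .Y _ => true
  | .X i, .L _ _ => (i : ℕ) == 0
  | .X i, .R _ _ => (i : ℕ) == 0
  | .Y i, .L _ _ => (i : ℕ) == 0
  | .Y i, .R _ _ => (i : ℕ) == 0
  | .W, .X i => (i : ℕ) == 0
  | .W, .Y i => (i : ℕ) == 0
  | .W, .L _ i => (i : ℕ) == 0
  | _, _ => false

/-- The graph `G'` obtained from `G` by the four-step construction. -/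
def Gp {V : Type} [DecidableEq V] (n0 : ℕ) (G : SimpleGraph V) [DecidableRel G.Adj] :
    SimpleGraph (GPV V n0) :=
  SimpleGraph.fromRel (fun a b => gpRel n0 G a b = true)

instance {V : Type} [DecidableEq V] (n0 : ℕ) (G : SimpleGraph V) [DecidableRel G.Adj] :
    DecidableRel (Gp n0 G).Adj := fun a b =>
  decidable_of_iff _ (SimpleGraph.fromRel_adj (fun a b => gpRel n0 G a b = true) a b).symm

/-- The special frame vertex `x₀`. -/
def xzero (V : Type) (n0 : ℕ) (h : 0 < n0) : GPV V n0 :=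
  GPV.X ⟨0, Nat.mul_pos (Nat.mul_pos (by norm_num) h) h⟩

/-- The special frame vertex `y₀`. -/
def yzero (V : Type) (n0 : ℕ) (h : 0 < n0) : GPV V n0 :=
  GPV.Y ⟨0, Nat.mul_pos (Nat.mul_pos (by norm_num) h) h⟩

/-- `cutSet H S` is the number of edges of `H` with exactly one endpoint in `S`. -/
def cutSet {W : Type} [Fintype W] [DecidableEq W] (H : SimpleGraph W) [DecidableRel H.Adj]
    (S : Finset W) : ℕ :=
  (Finset.univ.filter (fun pr : W × W => H.Adj pr.1 pr.2 ∧ pr.1 ∈ S ∧ pr.2 ∉ S)).card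

/-- `maxCut H` is the maximum of `cutSet H S` over all vertex subsets `S`. -/
def maxCut {W : Type} [Fintype W] [DecidableEq W] (H : SimpleGraph W) [DecidableRel H.Adj] : ℕ :=
  (Finset.univ : Finset (Finset W)).sup (fun S => cutSet H S)

end QAOA

namespace QAOA

set_option linter.unusedSectionVars false

open Finset

/-! ### Generic counting helpers -/

section helpers
variable {α β : Type*} [Fintype α] [Fintype β]

lemma sum_ind_and (P : α → Prop) (Q : β → Prop) [DecidablePred P] [DecidablePred Q] :
    ∑ i : α, ∑ j : β, (if P i ∧ Q j then 1 else 0) =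
      (Finset.univ.filter P).card * (Finset.univ.filter Q).card := by
  have h : ∀ (i : α) (j : β), (if P i ∧ Q j then (1:ℕ) else 0) =
      (if P i then 1 else 0) * (if Q j then 1 else 0) := by
    intro i j; by_cases hP : P i <;> by_cases hQ : Q j <;> simp [hP, hQ]
  simp_rw [h, ← Finset.mul_sum, ← Finset.sum_mul]
  rw [Finset.sum_boole, Finset.sum_boole]
  push_cast; ring

lemma card_filter_not (P : α → Prop) [DecidablePred P] :
    (Finset.univ.filter fun i => ¬ P i).card = Fintype.card α - (Finset.univ.filter P).card := by
  have := Finset.card_filter_add_card_filter_not (s := (Finset.univ : Finset α)) P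
  simp only [Finset.card_univ] at this
  omega

lemma sum_fin_zero' {m : ℕ} (hm : 0 < m) (g : Fin m → ℕ)
    (h : ∀ k : Fin m, (k : ℕ) ≠ 0 → g k = 0) : ∑ k : Fin m, g k = g ⟨0, hm⟩ := by
  refine Finset.sum_eq_single_of_mem (⟨0, hm⟩ : Fin m) (Finset.mem_univ _) ?_
  intro b _ hb
  exact h b (fun hb0 => hb (Fin.ext hb0))

lemma sum_fin_ind {m : ℕ} (hm : 0 < m) (P : Fin m → Prop) [DecidablePred P] :
    ∑ k : Fin m, (if ((k : ℕ) = 0 ∧ P k) then 1 else 0) = if P ⟨0, hm⟩ then 1 else 0 := by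
  rw [sum_fin_zero' hm]
  · simp
  · intro k hk; simp [hk]

end helpers

/-! ### Summing over the vertex type of `G'` -/

variable {V : Type} [Fintype V] [DecidableEq V]

def gpvEquiv (n0 : ℕ) :
    ((V × Fin (n0+1)) ⊕ ((V × Fin (10*n0)) ⊕ (Fin (100*n0*n0) ⊕ (Fin (100*n0*n0) ⊕ Unit))))
      ≃ GPV V n0 where
  toFun x := match x with
    | .inl (u, i) => .L u i
    | .inr (.inl (u, j)) => .R u j
    | .inr (.inr (.inl k)) => .X k
    | .inr (.inr (.inr (.inl k))) => .Y k
    | .inr (.inr (.inr (.inr _))) => .W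
  invFun x := match x with
    | .L u i => .inl (u, i)
    | .R u j => .inr (.inl (u, j))
    | .X k => .inr (.inr (.inl k))
    | .Y k => .inr (.inr (.inr (.inl k)))
    | .W => .inr (.inr (.inr (.inr ())))
  left_inv x := by rcases x with ⟨u,i⟩ | (⟨u,j⟩ | (k | (k | ⟨⟩))) <;> rfl
  right_inv x := by cases x <;> rfl

lemma sum_gpv (n0 : ℕ) (f : GPV V n0 → ℕ) :
    ∑ x, f x = (∑ u, ∑ i, f (.L u i)) + ((∑ u, ∑ j, f (.R u j)) +
      ((∑ k, f (.X k)) + ((∑ k, f (.Y k)) + f .W))) := by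
  rw [← (gpvEquiv n0).sum_comp f]
  simp [Fintype.sum_sum_type, Fintype.sum_prod_type, gpvEquiv]

/-! ### Adjacency description of `G'` -/

variable (n0 : ℕ) (G : SimpleGraph V) [DecidableRel G.Adj]

@[simp] lemma adj_LL (u v : V) (i j : Fin (n0+1)) :
    (Gp n0 G).Adj (.L u i) (.L v j) ↔ G.Adj u v ∧ i = j := by
  simp only [Gp, SimpleGraph.fromRel_adj, gpRel, Bool.and_eq_true, decide_eq_true_eq,
    beq_iff_eq, Fin.val_inj, ne_eq, GPV.L.injEq, not_and]
  constructor
  · rintro ⟨hne, (⟨h1, h2⟩ | ⟨h1, h2⟩)⟩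
    · exact ⟨h1, h2⟩
    · exact ⟨G.adj_symm h1, h2.symm⟩
  · rintro ⟨h, rfl⟩
    exact ⟨fun he => absurd (he ▸ h) (G.irrefl), Or.inl ⟨h, rfl⟩⟩

@[simp] lemma adj_LR (u v : V) (i : Fin (n0+1)) (j : Fin (10*n0)) :
    (Gp n0 G).Adj (.L u i) (.R v j) ↔ u = v := by
  simp [Gp, SimpleGraph.fromRel_adj, gpRel]

@[simp] lemma adj_RL (u v : V) (j : Fin (10*n0)) (i : Fin (n0+1)) :
    (Gp n0 G).Adj (.R u j) (.L v i) ↔ v = u := by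
  simp [Gp, SimpleGraph.fromRel_adj, gpRel]

@[simp] lemma adj_LX (u : V) (i : Fin (n0+1)) (k : Fin (100*n0*n0)) :
    (Gp n0 G).Adj (.L u i) (.X k) ↔ (k : ℕ) = 0 := by
  simp [Gp, SimpleGraph.fromRel_adj, gpRel]
@[simp] lemma adj_XL (u : V) (i : Fin (n0+1)) (k : Fin (100*n0*n0)) :
    (Gp n0 G).Adj (.X k) (.L u i) ↔ (k : ℕ) = 0 := by
  simp [Gp, SimpleGraph.fromRel_adj, gpRel]
@[simp] lemma adj_LY (u : V) (i : Fin (n0+1)) (k : Fin (100*n0*n0)) :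
    (Gp n0 G).Adj (.L u i) (.Y k) ↔ (k : ℕ) = 0 := by
  simp [Gp, SimpleGraph.fromRel_adj, gpRel]
@[simp] lemma adj_YL (u : V) (i : Fin (n0+1)) (k : Fin (100*n0*n0)) :
    (Gp n0 G).Adj (.Y k) (.L u i) ↔ (k : ℕ) = 0 := by
  simp [Gp, SimpleGraph.fromRel_adj, gpRel]
@[simp] lemma adj_RX (u : V) (j : Fin (10*n0)) (k : Fin (100*n0*n0)) :
    (Gp n0 G).Adj (.R u j) (.X k) ↔ (k : ℕ) = 0 := by
  simp [Gp, SimpleGraph.fromRel_adj, gpRel]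
@[simp] lemma adj_XR (u : V) (j : Fin (10*n0)) (k : Fin (100*n0*n0)) :
    (Gp n0 G).Adj (.X k) (.R u j) ↔ (k : ℕ) = 0 := by
  simp [Gp, SimpleGraph.fromRel_adj, gpRel]
@[simp] lemma adj_RY (u : V) (j : Fin (10*n0)) (k : Fin (100*n0*n0)) :
    (Gp n0 G).Adj (.R u j) (.Y k) ↔ (k : ℕ) = 0 := by
  simp [Gp, SimpleGraph.fromRel_adj, gpRel]
@[simp] lemma adj_YR (u : V) (j : Fin (10*n0)) (k : Fin (100*n0*n0)) :
    (Gp n0 G).Adj (.Y k) (.R u j) ↔ (k : ℕ) = 0 := by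
  simp [Gp, SimpleGraph.fromRel_adj, gpRel]
@[simp] lemma adj_XY (k k' : Fin (100*n0*n0)) :
    (Gp n0 G).Adj (.X k) (.Y k') := by
  simp [Gp, SimpleGraph.fromRel_adj, gpRel]
@[simp] lemma adj_YX (k k' : Fin (100*n0*n0)) :
    (Gp n0 G).Adj (.Y k) (.X k') := by
  simp [Gp, SimpleGraph.fromRel_adj, gpRel]
@[simp] lemma adj_XX (k k' : Fin (100*n0*n0)) :
    ¬ (Gp n0 G).Adj (.X k) (.X k') := by
  simp [Gp, SimpleGraph.fromRel_adj, gpRel]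
@[simp] lemma adj_YY (k k' : Fin (100*n0*n0)) :
    ¬ (Gp n0 G).Adj (.Y k) (.Y k') := by
  simp [Gp, SimpleGraph.fromRel_adj, gpRel]
@[simp] lemma adj_RR (u v : V) (j j' : Fin (10*n0)) :
    ¬ (Gp n0 G).Adj (.R u j) (.R v j') := by
  simp [Gp, SimpleGraph.fromRel_adj, gpRel]
@[simp] lemma adj_WX (k : Fin (100*n0*n0)) :
    (Gp n0 G).Adj .W (.X k) ↔ (k : ℕ) = 0 := by
  simp [Gp, SimpleGraph.fromRel_adj, gpRel]
@[simp] lemma adj_XW (k : Fin (100*n0*n0)) :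
    (Gp n0 G).Adj (.X k) .W ↔ (k : ℕ) = 0 := by
  simp [Gp, SimpleGraph.fromRel_adj, gpRel]
@[simp] lemma adj_WY (k : Fin (100*n0*n0)) :
    (Gp n0 G).Adj .W (.Y k) ↔ (k : ℕ) = 0 := by
  simp [Gp, SimpleGraph.fromRel_adj, gpRel]
@[simp] lemma adj_YW (k : Fin (100*n0*n0)) :
    (Gp n0 G).Adj (.Y k) .W ↔ (k : ℕ) = 0 := by
  simp [Gp, SimpleGraph.fromRel_adj, gpRel]
@[simp] lemma adj_WL (u : V) (i : Fin (n0+1)) :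
    (Gp n0 G).Adj .W (.L u i) ↔ (i : ℕ) = 0 := by
  simp [Gp, SimpleGraph.fromRel_adj, gpRel]
@[simp] lemma adj_LW (u : V) (i : Fin (n0+1)) :
    (Gp n0 G).Adj (.L u i) .W ↔ (i : ℕ) = 0 := by
  simp [Gp, SimpleGraph.fromRel_adj, gpRel]
@[simp] lemma adj_WR (u : V) (j : Fin (10*n0)) :
    ¬ (Gp n0 G).Adj .W (.R u j) := by
  simp [Gp, SimpleGraph.fromRel_adj, gpRel]
@[simp] lemma adj_RW (u : V) (j : Fin (10*n0)) :
    ¬ (Gp n0 G).Adj (.R u j) .W := by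
  simp [Gp, SimpleGraph.fromRel_adj, gpRel]
@[simp] lemma adj_WW : ¬ (Gp n0 G).Adj (GPV.W : GPV V n0) .W := by
  simp [Gp, SimpleGraph.fromRel_adj, gpRel]

/-! ### Counting quantities attached to a cut of `G'` -/

def cntL (S : Finset (GPV V n0)) (u : V) : ℕ :=
  (Finset.univ.filter fun i : Fin (n0+1) => GPV.L u i ∈ S).card
def cntR (S : Finset (GPV V n0)) (u : V) : ℕ :=
  (Finset.univ.filter fun j : Fin (10*n0) => GPV.R u j ∈ S).card
def cntX (S : Finset (GPV V n0)) : ℕ :=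
  (Finset.univ.filter fun k : Fin (100*n0*n0) => GPV.X k ∈ S).card
def cntY (S : Finset (GPV V n0)) : ℕ :=
  (Finset.univ.filter fun k : Fin (100*n0*n0) => GPV.Y k ∈ S).card
def lvl (S : Finset (GPV V n0)) (i : Fin (n0+1)) : Finset V :=
  Finset.univ.filter fun u => GPV.L u i ∈ S

lemma cutSet_eq_sum {W : Type} [Fintype W] [DecidableEq W] (H : SimpleGraph W)
    [DecidableRel H.Adj] (S : Finset W) :
    cutSet H S = ∑ a : W, ∑ b : W, (if H.Adj a b ∧ a ∈ S ∧ b ∉ S then 1 else 0) := by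
  rw [cutSet, Finset.card_filter, ← Fintype.sum_prod_type']

lemma hm100 (hn0 : 0 < n0) : 0 < 100*n0*n0 := Nat.mul_pos (Nat.mul_pos (by norm_num) hn0) hn0

section blocks
variable (S : Finset (GPV V n0))

lemma blockLL :
    (∑ u, ∑ i, ∑ v, ∑ j, if (Gp n0 G).Adj (.L u i) (.L v j) ∧ GPV.L u i ∈ S ∧ GPV.L v j ∉ S
        then 1 else 0)
      = ∑ i, cutSet G (lvl n0 S i) := by
  simp only [adj_LL]
  have h : ∀ (u : V) (i : Fin (n0+1)) (v : V) (j : Fin (n0+1)),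
      (if (G.Adj u v ∧ i = j) ∧ GPV.L u i ∈ S ∧ GPV.L v j ∉ S then (1:ℕ) else 0) =
      if j = i then (if G.Adj u v ∧ GPV.L u i ∈ S ∧ GPV.L v i ∉ S then 1 else 0) else 0 := by
    intro u i v j
    by_cases hij : j = i
    · subst hij; simp [and_assoc]
    · have : ¬ i = j := fun hh => hij hh.symm
      simp [hij, this]
  simp_rw [h, Finset.sum_ite_eq' Finset.univ, Finset.mem_univ, if_true]
  rw [Finset.sum_comm]
  refine Finset.sum_congr rfl fun i _ => ?_
  rw [cutSet_eq_sum]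
  refine Finset.sum_congr rfl fun u _ => Finset.sum_congr rfl fun v _ => ?_
  simp [lvl]

lemma blockLR :
    (∑ u, ∑ i, ∑ v, ∑ j, if (Gp n0 G).Adj (.L u i) (.R v j) ∧ GPV.L u i ∈ S ∧ GPV.R v j ∉ S
        then 1 else 0)
      = ∑ u, cntL n0 S u * (10*n0 - cntR n0 S u) := by
  simp only [adj_LR]
  have h : ∀ (u : V) (i : Fin (n0+1)),
      (∑ v, ∑ j, if u = v ∧ GPV.L u i ∈ S ∧ GPV.R v j ∉ S then (1:ℕ) else 0)
        = ∑ j, if GPV.L u i ∈ S ∧ GPV.R u j ∉ S then 1 else 0 := by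
    intro u i
    rw [Finset.sum_eq_single_of_mem u (Finset.mem_univ u)]
    · simp
    · intro v _ hv
      refine Finset.sum_eq_zero fun j _ => ?_
      rw [if_neg]; rintro ⟨rfl, -⟩; exact hv rfl
  simp_rw [h]
  refine Finset.sum_congr rfl fun u _ => ?_
  rw [sum_ind_and, card_filter_not]
  simp [cntL, cntR]

lemma blockRL :
    (∑ u, ∑ j, ∑ v, ∑ i, if (Gp n0 G).Adj (.R u j) (.L v i) ∧ GPV.R u j ∈ S ∧ GPV.L v i ∉ S
        then 1 else 0)
      = ∑ u, cntR n0 S u * ((n0+1) - cntL n0 S u) := by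
  simp only [adj_RL]
  have h : ∀ (u : V) (j : Fin (10*n0)),
      (∑ v, ∑ i, if v = u ∧ GPV.R u j ∈ S ∧ GPV.L v i ∉ S then (1:ℕ) else 0)
        = ∑ i, if GPV.R u j ∈ S ∧ GPV.L u i ∉ S then 1 else 0 := by
    intro u j
    rw [Finset.sum_eq_single_of_mem u (Finset.mem_univ u)]
    · simp
    · intro v _ hv
      refine Finset.sum_eq_zero fun i _ => ?_
      rw [if_neg]; rintro ⟨rfl, -⟩; exact hv rfl
  simp_rw [h]
  refine Finset.sum_congr rfl fun u _ => ?_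
  rw [sum_ind_and, card_filter_not]
  simp [cntL, cntR]

lemma blockXY :
    (∑ k, ∑ k', if (Gp n0 G).Adj (.X k) (.Y k') ∧ GPV.X k ∈ S ∧ GPV.Y k' ∉ S then 1 else 0)
      = cntX n0 S * (100*n0*n0 - cntY n0 S) := by
  simp only [adj_XY, true_and]
  rw [sum_ind_and, card_filter_not]
  simp [cntX, cntY]

lemma blockYX :
    (∑ k, ∑ k', if (Gp n0 G).Adj (.Y k) (.X k') ∧ GPV.Y k ∈ S ∧ GPV.X k' ∉ S then 1 else 0)
      = cntY n0 S * (100*n0*n0 - cntX n0 S) := by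
  simp only [adj_YX, true_and]
  rw [sum_ind_and, card_filter_not]
  simp [cntX, cntY]

lemma blockXL :
    (∑ k, ∑ u, ∑ i, if (Gp n0 G).Adj (.X k) (.L u i) ∧ GPV.X k ∈ S ∧ GPV.L u i ∉ S
        then 1 else 0)
      = ∑ u, ∑ i, if xzero V n0 hn0 ∈ S ∧ GPV.L u i ∉ S then 1 else 0 := by
  simp only [adj_XL]
  rw [sum_fin_zero' (hm100 n0 hn0)]
  · exact Finset.sum_congr rfl fun u _ => Finset.sum_congr rfl fun i _ =>
      if_congr (by simp [xzero]) rfl rfl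
  · intro k hk; simp [hk]

lemma blockXR :
    (∑ k, ∑ u, ∑ j, if (Gp n0 G).Adj (.X k) (.R u j) ∧ GPV.X k ∈ S ∧ GPV.R u j ∉ S
        then 1 else 0)
      = ∑ u, ∑ j, if xzero V n0 hn0 ∈ S ∧ GPV.R u j ∉ S then 1 else 0 := by
  simp only [adj_XR]
  rw [sum_fin_zero' (hm100 n0 hn0)]
  · exact Finset.sum_congr rfl fun u _ => Finset.sum_congr rfl fun i _ =>
      if_congr (by simp [xzero]) rfl rfl
  · intro k hk; simp [hk]

lemma blockYL :
    (∑ k, ∑ u, ∑ i, if (Gp n0 G).Adj (.Y k) (.L u i) ∧ GPV.Y k ∈ S ∧ GPV.L u i ∉ S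
        then 1 else 0)
      = ∑ u, ∑ i, if yzero V n0 hn0 ∈ S ∧ GPV.L u i ∉ S then 1 else 0 := by
  simp only [adj_YL]
  rw [sum_fin_zero' (hm100 n0 hn0)]
  · exact Finset.sum_congr rfl fun u _ => Finset.sum_congr rfl fun i _ =>
      if_congr (by simp [yzero]) rfl rfl
  · intro k hk; simp [hk]

lemma blockYR :
    (∑ k, ∑ u, ∑ j, if (Gp n0 G).Adj (.Y k) (.R u j) ∧ GPV.Y k ∈ S ∧ GPV.R u j ∉ S
        then 1 else 0)
      = ∑ u, ∑ j, if yzero V n0 hn0 ∈ S ∧ GPV.R u j ∉ S then 1 else 0 := by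
  simp only [adj_YR]
  rw [sum_fin_zero' (hm100 n0 hn0)]
  · exact Finset.sum_congr rfl fun u _ => Finset.sum_congr rfl fun i _ =>
      if_congr (by simp [yzero]) rfl rfl
  · intro k hk; simp [hk]

lemma blockLX :
    (∑ u, ∑ i, ∑ k, if (Gp n0 G).Adj (.L u i) (.X k) ∧ GPV.L u i ∈ S ∧ GPV.X k ∉ S
        then 1 else 0)
      = ∑ u, ∑ i, if GPV.L u i ∈ S ∧ xzero V n0 hn0 ∉ S then 1 else 0 := by
  simp only [adj_LX]
  refine Finset.sum_congr rfl fun u _ => Finset.sum_congr rfl fun i _ => ?_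
  rw [sum_fin_ind (hm100 n0 hn0)]
  exact if_congr (by simp [xzero]) rfl rfl

lemma blockRX :
    (∑ u, ∑ j, ∑ k, if (Gp n0 G).Adj (.R u j) (.X k) ∧ GPV.R u j ∈ S ∧ GPV.X k ∉ S
        then 1 else 0)
      = ∑ u, ∑ j, if GPV.R u j ∈ S ∧ xzero V n0 hn0 ∉ S then 1 else 0 := by
  simp only [adj_RX]
  refine Finset.sum_congr rfl fun u _ => Finset.sum_congr rfl fun j _ => ?_
  rw [sum_fin_ind (hm100 n0 hn0)]
  exact if_congr (by simp [xzero]) rfl rfl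

lemma blockLY :
    (∑ u, ∑ i, ∑ k, if (Gp n0 G).Adj (.L u i) (.Y k) ∧ GPV.L u i ∈ S ∧ GPV.Y k ∉ S
        then 1 else 0)
      = ∑ u, ∑ i, if GPV.L u i ∈ S ∧ yzero V n0 hn0 ∉ S then 1 else 0 := by
  simp only [adj_LY]
  refine Finset.sum_congr rfl fun u _ => Finset.sum_congr rfl fun i _ => ?_
  rw [sum_fin_ind (hm100 n0 hn0)]
  exact if_congr (by simp [yzero]) rfl rfl

lemma blockRY :
    (∑ u, ∑ j, ∑ k, if (Gp n0 G).Adj (.R u j) (.Y k) ∧ GPV.R u j ∈ S ∧ GPV.Y k ∉ S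
        then 1 else 0)
      = ∑ u, ∑ j, if GPV.R u j ∈ S ∧ yzero V n0 hn0 ∉ S then 1 else 0 := by
  simp only [adj_RY]
  refine Finset.sum_congr rfl fun u _ => Finset.sum_congr rfl fun j _ => ?_
  rw [sum_fin_ind (hm100 n0 hn0)]
  exact if_congr (by simp [yzero]) rfl rfl

lemma blockWX :
    (∑ k, if (Gp n0 G).Adj (GPV.W : GPV V n0) (.X k) ∧ (GPV.W : GPV V n0) ∈ S ∧ GPV.X k ∉ S
        then 1 else 0)
      = if (GPV.W : GPV V n0) ∈ S ∧ xzero V n0 hn0 ∉ S then 1 else 0 := by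
  simp only [adj_WX]
  rw [sum_fin_ind (hm100 n0 hn0)]
  exact if_congr (by simp [xzero]) rfl rfl

lemma blockXW :
    (∑ k, if (Gp n0 G).Adj (.X k) (GPV.W : GPV V n0) ∧ GPV.X k ∈ S ∧ (GPV.W : GPV V n0) ∉ S
        then 1 else 0)
      = if xzero V n0 hn0 ∈ S ∧ (GPV.W : GPV V n0) ∉ S then 1 else 0 := by
  simp only [adj_XW]
  rw [sum_fin_ind (hm100 n0 hn0)]
  exact if_congr (by simp [xzero]) rfl rfl

lemma blockWY :
    (∑ k, if (Gp n0 G).Adj (GPV.W : GPV V n0) (.Y k) ∧ (GPV.W : GPV V n0) ∈ S ∧ GPV.Y k ∉ S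
        then 1 else 0)
      = if (GPV.W : GPV V n0) ∈ S ∧ yzero V n0 hn0 ∉ S then 1 else 0 := by
  simp only [adj_WY]
  rw [sum_fin_ind (hm100 n0 hn0)]
  exact if_congr (by simp [yzero]) rfl rfl

lemma blockYW :
    (∑ k, if (Gp n0 G).Adj (.Y k) (GPV.W : GPV V n0) ∧ GPV.Y k ∈ S ∧ (GPV.W : GPV V n0) ∉ S
        then 1 else 0)
      = if yzero V n0 hn0 ∈ S ∧ (GPV.W : GPV V n0) ∉ S then 1 else 0 := by
  simp only [adj_YW]
  rw [sum_fin_ind (hm100 n0 hn0)]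
  exact if_congr (by simp [yzero]) rfl rfl

lemma blockWL :
    (∑ u, ∑ i, if (Gp n0 G).Adj (GPV.W : GPV V n0) (.L u i) ∧ (GPV.W : GPV V n0) ∈ S ∧ GPV.L u i ∉ S
        then 1 else 0)
      = ∑ u, if (GPV.W : GPV V n0) ∈ S ∧ GPV.L u ⟨0, Nat.succ_pos n0⟩ ∉ S then 1 else 0 := by
  simp only [adj_WL]
  refine Finset.sum_congr rfl fun u _ => ?_
  rw [sum_fin_ind (Nat.succ_pos n0)]

lemma blockLW :
    (∑ u, ∑ i, if (Gp n0 G).Adj (.L u i) (GPV.W : GPV V n0) ∧ GPV.L u i ∈ S ∧ (GPV.W : GPV V n0) ∉ S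
        then 1 else 0)
      = ∑ u, if GPV.L u ⟨0, Nat.succ_pos n0⟩ ∈ S ∧ (GPV.W : GPV V n0) ∉ S then 1 else 0 := by
  simp only [adj_LW]
  refine Finset.sum_congr rfl fun u _ => ?_
  rw [sum_fin_ind (Nat.succ_pos n0)]

end blocks


/-! ### The master cut-counting formula -/

lemma master (hn0 : 0 < n0) (S : Finset (GPV V n0)) :
    cutSet (Gp n0 G) S =
      (∑ i, cutSet G (lvl n0 S i))
      + (∑ u, cntL n0 S u * (10*n0 - cntR n0 S u))
      + (∑ u, cntR n0 S u * ((n0+1) - cntL n0 S u))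
      + cntX n0 S * (100*n0*n0 - cntY n0 S)
      + cntY n0 S * (100*n0*n0 - cntX n0 S)
      + (∑ u, ∑ i : Fin (n0+1), if xzero V n0 hn0 ∈ S ∧ GPV.L u i ∉ S then 1 else 0)
      + (∑ u, ∑ i : Fin (n0+1), if GPV.L u i ∈ S ∧ xzero V n0 hn0 ∉ S then 1 else 0)
      + (∑ u, ∑ j : Fin (10*n0), if xzero V n0 hn0 ∈ S ∧ GPV.R u j ∉ S then 1 else 0)
      + (∑ u, ∑ j : Fin (10*n0), if GPV.R u j ∈ S ∧ xzero V n0 hn0 ∉ S then 1 else 0)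
      + (∑ u, ∑ i : Fin (n0+1), if yzero V n0 hn0 ∈ S ∧ GPV.L u i ∉ S then 1 else 0)
      + (∑ u, ∑ i : Fin (n0+1), if GPV.L u i ∈ S ∧ yzero V n0 hn0 ∉ S then 1 else 0)
      + (∑ u, ∑ j : Fin (10*n0), if yzero V n0 hn0 ∈ S ∧ GPV.R u j ∉ S then 1 else 0)
      + (∑ u, ∑ j : Fin (10*n0), if GPV.R u j ∈ S ∧ yzero V n0 hn0 ∉ S then 1 else 0)
      + ((if (GPV.W : GPV V n0) ∈ S ∧ xzero V n0 hn0 ∉ S then 1 else 0)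
          + (if xzero V n0 hn0 ∈ S ∧ (GPV.W : GPV V n0) ∉ S then 1 else 0))
      + ((if (GPV.W : GPV V n0) ∈ S ∧ yzero V n0 hn0 ∉ S then 1 else 0)
          + (if yzero V n0 hn0 ∈ S ∧ (GPV.W : GPV V n0) ∉ S then 1 else 0))
      + (∑ u, if (GPV.W : GPV V n0) ∈ S ∧ GPV.L u ⟨0, Nat.succ_pos n0⟩ ∉ S then 1 else 0)
      + (∑ u, if GPV.L u ⟨0, Nat.succ_pos n0⟩ ∈ S ∧ (GPV.W : GPV V n0) ∉ S then 1 else 0) := by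
  rw [cutSet_eq_sum]
  rw [sum_gpv n0 (fun a => ∑ b, if (Gp n0 G).Adj a b ∧ a ∈ S ∧ b ∉ S then 1 else 0)]
  simp only [sum_gpv n0]
  simp only [Finset.sum_add_distrib]
  simp only [adj_RR, adj_XX, adj_YY, adj_WR, adj_RW, adj_WW, false_and, if_false,
    Finset.sum_const_zero, add_zero, zero_add]
  rw [blockLL n0 G S, blockLR n0 G S, blockRL n0 G S, blockXY n0 G S, blockYX n0 G S,
    blockXL n0 G S, blockXR n0 G S, blockYL n0 G S, blockYR n0 G S,
    blockLX n0 G S, blockRX n0 G S, blockLY n0 G S, blockRY n0 G S,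
    blockWX n0 G S, blockXW n0 G S, blockWY n0 G S, blockYW n0 G S,
    blockWL n0 G S, blockLW n0 G S]
  ring
  all_goals exact hn0


/-! ### Elementary bounds -/

lemma ind_sum_le {γ : Type*} [Fintype γ] (P : γ → Prop) [DecidablePred P] :
    ∑ c : γ, (if P c then 1 else 0) ≤ Fintype.card γ := by
  calc ∑ c : γ, (if P c then 1 else 0) ≤ ∑ _c : γ, 1 := by
        refine Finset.sum_le_sum fun c _ => ?_
        split <;> omega
    _ = Fintype.card γ := by simp

lemma cntL_le (S : Finset (GPV V n0)) (u : V) : cntL n0 S u ≤ n0 + 1 := by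
  classical
  calc cntL n0 S u ≤ (Finset.univ : Finset (Fin (n0+1))).card := Finset.card_filter_le _ _
    _ = n0 + 1 := by simp

lemma cntR_le (S : Finset (GPV V n0)) (u : V) : cntR n0 S u ≤ 10 * n0 := by
  calc cntR n0 S u ≤ (Finset.univ : Finset (Fin (10*n0))).card := Finset.card_filter_le _ _
    _ = 10 * n0 := by simp

lemma cntX_le (S : Finset (GPV V n0)) : cntX n0 S ≤ 100*n0*n0 := by
  calc cntX n0 S ≤ (Finset.univ : Finset (Fin (100*n0*n0))).card := Finset.card_filter_le _ _
    _ = 100*n0*n0 := by simp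

lemma cntY_le (S : Finset (GPV V n0)) : cntY n0 S ≤ 100*n0*n0 := by
  calc cntY n0 S ≤ (Finset.univ : Finset (Fin (100*n0*n0))).card := Finset.card_filter_le _ _
    _ = 100*n0*n0 := by simp

/-- Cut of a complete bipartite block is at most the product of the side sizes. -/
lemma bip_le {p q A B : ℕ} (hp : p ≤ A) (hq : q ≤ B) :
    p * (B - q) + q * (A - p) ≤ A * B := by
  obtain ⟨p', rfl⟩ := Nat.exists_eq_add_of_le hp
  obtain ⟨q', rfl⟩ := Nat.exists_eq_add_of_le hq
  simp only [Nat.add_sub_cancel_left]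
  nlinarith

/-- Strict loss in a complete bipartite block when two same-side vertices are forced. -/
lemma bip_loss {p q m : ℕ} (hp : p ≤ m) (hq : q ≤ m)
    (h : (1 ≤ p ∧ 1 ≤ q) ∨ (p + 1 ≤ m ∧ q + 1 ≤ m)) :
    p * (m - q) + q * (m - p) + m ≤ m * m := by
  set p' := m - p with hp'def
  set q' := m - q with hq'def
  have hp' : p + p' = m := by omega
  have hq' : q + q' = m := by omega
  have key : m ≤ p * q + p' * q' := by
    rcases h with ⟨hp1, hq1⟩ | ⟨hp1, hq1⟩
    · rcases Nat.eq_zero_or_pos q' with hq0 | hq0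
      · nlinarith
      · nlinarith
    · have hp2 : 1 ≤ p' := by omega
      have hq2 : 1 ≤ q' := by omega
      rcases Nat.eq_zero_or_pos q with hq0 | hq0
      · nlinarith
      · nlinarith
  have expand : m * m = p * q + p * q' + p' * q + p' * q' := by
    have e2 : (p + p') * (q + q') = p * q + p * q' + p' * q + p' * q' := by ring
    rw [hp', hq'] at e2
    exact e2
  linarith

/-- Sum of the four one-sided indicator sums for a pair `x, y` on opposite sides. -/
lemma xor_pair_sum {γ δ : Type*} [Fintype γ] [Fintype δ]
    (S : Finset (GPV V n0)) (x y : GPV V n0) (f : γ → δ → GPV V n0)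
    (hxy : x ∈ S ↔ y ∉ S) :
    (∑ c : γ, ∑ d : δ, if x ∈ S ∧ f c d ∉ S then 1 else 0)
      + (∑ c : γ, ∑ d : δ, if f c d ∈ S ∧ x ∉ S then 1 else 0)
      + ((∑ c : γ, ∑ d : δ, if y ∈ S ∧ f c d ∉ S then 1 else 0)
      + (∑ c : γ, ∑ d : δ, if f c d ∈ S ∧ y ∉ S then 1 else 0))
      = Fintype.card γ * Fintype.card δ := by
  classical
  simp only [← Finset.sum_add_distrib]
  have h1 : ∀ (c : γ) (d : δ),
      ((if x ∈ S ∧ f c d ∉ S then (1:ℕ) else 0) + (if f c d ∈ S ∧ x ∉ S then 1 else 0))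
        + ((if y ∈ S ∧ f c d ∉ S then 1 else 0) + (if f c d ∈ S ∧ y ∉ S then 1 else 0)) = 1 := by
    intro c d
    by_cases hx : x ∈ S <;> by_cases hg : f c d ∈ S <;> by_cases hy : y ∈ S <;>
      simp [hx, hg, hy] <;> tauto
  simp_rw [h1]
  simp [Finset.card_univ]

/-- A single pair of one-sided indicators is at most 1. -/
lemma pair_le_one (S : Finset (GPV V n0)) (x g : GPV V n0) :
    ((if x ∈ S ∧ g ∉ S then (1:ℕ) else 0) + (if g ∈ S ∧ x ∉ S then 1 else 0)) ≤ 1 := by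
  by_cases hx : x ∈ S <;> by_cases hg : g ∈ S <;> simp [hx, hg]


lemma ind_sum_le2 {γ δ : Type*} [Fintype γ] [Fintype δ] (P : γ → δ → Prop)
    [∀ c d, Decidable (P c d)] :
    ∑ c : γ, ∑ d : δ, (if P c d then 1 else 0) ≤ Fintype.card γ * Fintype.card δ := by
  calc ∑ c : γ, ∑ d : δ, (if P c d then 1 else 0) ≤ ∑ _c : γ, Fintype.card δ :=
        Finset.sum_le_sum fun c _ => ind_sum_le (P c)
    _ = Fintype.card γ * Fintype.card δ := by simp [mul_comm]

lemma w_pair_xor (S : Finset (GPV V n0)) (w x y : GPV V n0) (hxy : x ∈ S ↔ y ∉ S) :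
    ((if w ∈ S ∧ x ∉ S then (1:ℕ) else 0) + (if x ∈ S ∧ w ∉ S then 1 else 0))
      + ((if w ∈ S ∧ y ∉ S then 1 else 0) + (if y ∈ S ∧ w ∉ S then 1 else 0)) = 1 := by
  by_cases hw : w ∈ S <;> by_cases hx : x ∈ S <;> by_cases hy : y ∈ S <;>
    simp [hw, hx, hy] <;> tauto

/-! ### Upper bound -/

lemma cutSet_gp_le (hn0 : 0 < n0) (hV : Fintype.card V = n0) (S : Finset (GPV V n0)) :
    cutSet (Gp n0 G) S ≤
      ((10000 * n0 ^ 4 + n0 * (11 * n0 + 1) + 1) + 10 * n0 ^ 2 * (n0 + 1))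
        + (n0 + 1) * maxCut G + n0 := by
  have hm : 0 < 100*n0*n0 := hm100 n0 hn0
  rw [master n0 G hn0 S]
  have hsync : (∑ i : Fin (n0+1), cutSet G (lvl n0 S i)) ≤ (n0+1) * maxCut G := by
    calc (∑ i : Fin (n0+1), cutSet G (lvl n0 S i)) ≤ ∑ _i : Fin (n0+1), maxCut G :=
          Finset.sum_le_sum fun i _ => Finset.le_sup (Finset.mem_univ _)
      _ = (n0+1) * maxCut G := by simp [mul_comm]
  have hLR : (∑ u, cntL n0 S u * (10*n0 - cntR n0 S u))
      + (∑ u, cntR n0 S u * ((n0+1) - cntL n0 S u)) ≤ n0 * ((n0+1) * (10*n0)) := by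
    rw [← Finset.sum_add_distrib]
    calc (∑ u, (cntL n0 S u * (10*n0 - cntR n0 S u) + cntR n0 S u * ((n0+1) - cntL n0 S u)))
        ≤ ∑ _u : V, (n0+1) * (10*n0) :=
          Finset.sum_le_sum fun u _ => bip_le (cntL_le n0 S u) (cntR_le n0 S u)
      _ = n0 * ((n0+1) * (10*n0)) := by
          rw [Finset.sum_const, Finset.card_univ, hV, smul_eq_mul]
  have hWL : (∑ u, if (GPV.W : GPV V n0) ∈ S ∧ GPV.L u ⟨0, Nat.succ_pos n0⟩ ∉ S then 1 else 0)
      + (∑ u, if GPV.L u ⟨0, Nat.succ_pos n0⟩ ∈ S ∧ (GPV.W : GPV V n0) ∉ S then 1 else 0)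
      ≤ n0 := by
    rw [← Finset.sum_add_distrib]
    calc (∑ u : V, ((if (GPV.W : GPV V n0) ∈ S ∧ GPV.L u ⟨0, Nat.succ_pos n0⟩ ∉ S then 1 else 0)
          + (if GPV.L u ⟨0, Nat.succ_pos n0⟩ ∈ S ∧ (GPV.W : GPV V n0) ∉ S then 1 else 0)))
        ≤ ∑ _u : V, 1 :=
          Finset.sum_le_sum fun u _ => pair_le_one n0 S _ _
      _ = n0 := by rw [Finset.sum_const, Finset.card_univ, hV, smul_eq_mul, mul_one]
  by_cases hxy : xzero V n0 hn0 ∈ S ↔ yzero V n0 hn0 ∉ S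
  · -- x₀ and y₀ on opposite sides of the cut
    have hfgL := xor_pair_sum n0 S (xzero V n0 hn0) (yzero V n0 hn0)
      (fun (u : V) (i : Fin (n0+1)) => GPV.L u i) hxy
    have hfgR := xor_pair_sum n0 S (xzero V n0 hn0) (yzero V n0 hn0)
      (fun (u : V) (j : Fin (10*n0)) => GPV.R u j) hxy
    simp only [Finset.card_univ, hV, Fintype.card_fin] at hfgL hfgR
    have hw := w_pair_xor n0 S GPV.W (xzero V n0 hn0) (yzero V n0 hn0) hxy
    have hXY : cntX n0 S * (100*n0*n0 - cntY n0 S) + cntY n0 S * (100*n0*n0 - cntX n0 S)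
        ≤ (100*n0*n0) * (100*n0*n0) := bip_le (cntX_le n0 S) (cntY_le n0 S)
    have hmm : (100*n0*n0) * (100*n0*n0) = 10000 * n0^4 := by ring
    linarith
  · -- x₀ and y₀ on the same side of the cut
    have hsame : (xzero V n0 hn0 ∈ S ∧ yzero V n0 hn0 ∈ S)
        ∨ (xzero V n0 hn0 ∉ S ∧ yzero V n0 hn0 ∉ S) := by tauto
    have hdis : (1 ≤ cntX n0 S ∧ 1 ≤ cntY n0 S)
        ∨ (cntX n0 S + 1 ≤ 100*n0*n0 ∧ cntY n0 S + 1 ≤ 100*n0*n0) := by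
      rcases hsame with ⟨hx, hy⟩ | ⟨hx, hy⟩
      · left
        constructor
        · exact Finset.card_pos.mpr ⟨⟨0, hm⟩, Finset.mem_filter.mpr ⟨Finset.mem_univ _, hx⟩⟩
        · exact Finset.card_pos.mpr ⟨⟨0, hm⟩, Finset.mem_filter.mpr ⟨Finset.mem_univ _, hy⟩⟩
      · right
        constructor
        · have h2 := Finset.card_filter_add_card_filter_not
            (s := (Finset.univ : Finset (Fin (100*n0*n0)))) (fun k => GPV.X k ∈ S)
          have h3 : (0:ℕ) < (Finset.univ.filter fun k : Fin (100*n0*n0) =>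
              ¬ GPV.X k ∈ S).card :=
            Finset.card_pos.mpr ⟨⟨0, hm⟩, Finset.mem_filter.mpr ⟨Finset.mem_univ _, hx⟩⟩
          simp only [Finset.card_univ, Fintype.card_fin] at h2
          have : cntX n0 S = (Finset.univ.filter fun k : Fin (100*n0*n0) =>
              GPV.X k ∈ S).card := rfl
          omega
        · have h2 := Finset.card_filter_add_card_filter_not
            (s := (Finset.univ : Finset (Fin (100*n0*n0)))) (fun k => GPV.Y k ∈ S)
          have h3 : (0:ℕ) < (Finset.univ.filter fun k : Fin (100*n0*n0) =>
              ¬ GPV.Y k ∈ S).card :=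
            Finset.card_pos.mpr ⟨⟨0, hm⟩, Finset.mem_filter.mpr ⟨Finset.mem_univ _, hy⟩⟩
          simp only [Finset.card_univ, Fintype.card_fin] at h2
          have : cntY n0 S = (Finset.univ.filter fun k : Fin (100*n0*n0) =>
              GPV.Y k ∈ S).card := rfl
          omega
    have hXY : cntX n0 S * (100*n0*n0 - cntY n0 S) + cntY n0 S * (100*n0*n0 - cntX n0 S)
        + 100*n0*n0 ≤ (100*n0*n0) * (100*n0*n0) :=
      bip_loss (cntX_le n0 S) (cntY_le n0 S) hdis
    have bndL1 : (∑ u, ∑ i : Fin (n0+1), if xzero V n0 hn0 ∈ S ∧ GPV.L u i ∉ S then 1 else 0)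
        ≤ n0 * (n0+1) := by
      simpa [hV] using ind_sum_le2 (fun (u : V) (i : Fin (n0+1)) =>
        xzero V n0 hn0 ∈ S ∧ GPV.L u i ∉ S)
    have bndL2 : (∑ u, ∑ i : Fin (n0+1), if GPV.L u i ∈ S ∧ xzero V n0 hn0 ∉ S then 1 else 0)
        ≤ n0 * (n0+1) := by
      simpa [hV] using ind_sum_le2 (fun (u : V) (i : Fin (n0+1)) =>
        GPV.L u i ∈ S ∧ xzero V n0 hn0 ∉ S)
    have bndL3 : (∑ u, ∑ i : Fin (n0+1), if yzero V n0 hn0 ∈ S ∧ GPV.L u i ∉ S then 1 else 0)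
        ≤ n0 * (n0+1) := by
      simpa [hV] using ind_sum_le2 (fun (u : V) (i : Fin (n0+1)) =>
        yzero V n0 hn0 ∈ S ∧ GPV.L u i ∉ S)
    have bndL4 : (∑ u, ∑ i : Fin (n0+1), if GPV.L u i ∈ S ∧ yzero V n0 hn0 ∉ S then 1 else 0)
        ≤ n0 * (n0+1) := by
      simpa [hV] using ind_sum_le2 (fun (u : V) (i : Fin (n0+1)) =>
        GPV.L u i ∈ S ∧ yzero V n0 hn0 ∉ S)
    have bndR1 : (∑ u, ∑ j : Fin (10*n0), if xzero V n0 hn0 ∈ S ∧ GPV.R u j ∉ S then 1 else 0)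
        ≤ n0 * (10*n0) := by
      simpa [hV] using ind_sum_le2 (fun (u : V) (j : Fin (10*n0)) =>
        xzero V n0 hn0 ∈ S ∧ GPV.R u j ∉ S)
    have bndR2 : (∑ u, ∑ j : Fin (10*n0), if GPV.R u j ∈ S ∧ xzero V n0 hn0 ∉ S then 1 else 0)
        ≤ n0 * (10*n0) := by
      simpa [hV] using ind_sum_le2 (fun (u : V) (j : Fin (10*n0)) =>
        GPV.R u j ∈ S ∧ xzero V n0 hn0 ∉ S)
    have bndR3 : (∑ u, ∑ j : Fin (10*n0), if yzero V n0 hn0 ∈ S ∧ GPV.R u j ∉ S then 1 else 0)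
        ≤ n0 * (10*n0) := by
      simpa [hV] using ind_sum_le2 (fun (u : V) (j : Fin (10*n0)) =>
        yzero V n0 hn0 ∈ S ∧ GPV.R u j ∉ S)
    have bndR4 : (∑ u, ∑ j : Fin (10*n0), if GPV.R u j ∈ S ∧ yzero V n0 hn0 ∉ S then 1 else 0)
        ≤ n0 * (10*n0) := by
      simpa [hV] using ind_sum_le2 (fun (u : V) (j : Fin (10*n0)) =>
        GPV.R u j ∈ S ∧ yzero V n0 hn0 ∉ S)
    have hw1 := pair_le_one n0 S (GPV.W : GPV V n0) (xzero V n0 hn0)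
    have hw2 := pair_le_one n0 S (GPV.W : GPV V n0) (yzero V n0 hn0)
    have hmm : (100*n0*n0) * (100*n0*n0) = 10000 * n0^4 := by ring
    have hn1 : 1 ≤ n0 * n0 := Nat.one_le_iff_ne_zero.mpr (by positivity)
    nlinarith


/-! ### Lower bound: the cut built from an optimal cut of `G` -/

def inS0 (T : Finset V) : GPV V n0 → Bool
  | .L u _ => decide (u ∈ T)
  | .R u _ => decide (u ∉ T)
  | .X _ => true
  | _ => false

def S0 (T : Finset V) : Finset (GPV V n0) :=
  Finset.univ.filter (fun x => inS0 n0 T x = true)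

@[simp] lemma mem_S0_L (T : Finset V) (u : V) (i : Fin (n0+1)) :
    GPV.L u i ∈ S0 n0 T ↔ u ∈ T := by simp [S0, inS0]
@[simp] lemma mem_S0_R (T : Finset V) (u : V) (j : Fin (10*n0)) :
    GPV.R u j ∈ S0 n0 T ↔ u ∉ T := by simp [S0, inS0]
@[simp] lemma mem_S0_X (T : Finset V) (k : Fin (100*n0*n0)) :
    GPV.X k ∈ S0 n0 T := by simp [S0, inS0]
@[simp] lemma mem_S0_Y (T : Finset V) (k : Fin (100*n0*n0)) :
    GPV.Y k ∉ S0 n0 T := by simp [S0, inS0]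
@[simp] lemma mem_S0_W (T : Finset V) :
    (GPV.W : GPV V n0) ∉ S0 n0 T := by simp [S0, inS0]

lemma cutSet_gp_ge (hn0 : 0 < n0) (hV : Fintype.card V = n0) (T : Finset V) :
    ((10000 * n0 ^ 4 + n0 * (11 * n0 + 1) + 1) + 10 * n0 ^ 2 * (n0 + 1))
        + (n0 + 1) * cutSet G T ≤ cutSet (Gp n0 G) (S0 n0 T) := by
  have hm : 0 < 100*n0*n0 := hm100 n0 hn0
  rw [master n0 G hn0 (S0 n0 T)]
  -- synchronous part
  have hlvl : ∀ i : Fin (n0+1), lvl n0 (S0 n0 T) i = T := by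
    intro i; ext u; simp [lvl]
  have hsync : (∑ i : Fin (n0+1), cutSet G (lvl n0 (S0 n0 T) i)) = (n0+1) * cutSet G T := by
    simp only [hlvl]
    rw [Finset.sum_const, Finset.card_univ, Fintype.card_fin, smul_eq_mul]
  -- gadget counts
  have hcntL : ∀ u, cntL n0 (S0 n0 T) u = if u ∈ T then n0+1 else 0 := by
    intro u; by_cases h : u ∈ T <;> simp [cntL, h]
  have hcntR : ∀ u, cntR n0 (S0 n0 T) u = if u ∈ T then 0 else 10*n0 := by
    intro u; by_cases h : u ∈ T <;> simp [cntR, h]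
  have hT2 : (∑ u, cntL n0 (S0 n0 T) u * (10*n0 - cntR n0 (S0 n0 T) u))
      = T.card * ((n0+1) * (10*n0)) := by
    have h : ∀ u : V, cntL n0 (S0 n0 T) u * (10*n0 - cntR n0 (S0 n0 T) u)
        = if u ∈ T then (n0+1) * (10*n0) else 0 := by
      intro u; by_cases h : u ∈ T <;> simp [hcntL, hcntR, h]
    simp_rw [h]
    rw [Finset.sum_ite_mem, Finset.univ_inter, Finset.sum_const, smul_eq_mul]
  have hT3 : (∑ u, cntR n0 (S0 n0 T) u * ((n0+1) - cntL n0 (S0 n0 T) u))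
      = (n0 - T.card) * ((n0+1) * (10*n0)) := by
    have h : ∀ u : V, cntR n0 (S0 n0 T) u * ((n0+1) - cntL n0 (S0 n0 T) u)
        = if u ∈ Tᶜ then (n0+1) * (10*n0) else 0 := by
      intro u
      by_cases h : u ∈ T <;> simp [hcntL, hcntR, h, mul_comm]
    simp_rw [h]
    rw [Finset.sum_ite_mem, Finset.univ_inter, Finset.sum_const, smul_eq_mul,
      Finset.card_compl, hV]
  -- frame counts
  have hcntX : cntX n0 (S0 n0 T) = 100*n0*n0 := by simp [cntX]
  have hcntY : cntY n0 (S0 n0 T) = 0 := by simp [cntY]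
  -- frame-gadget part
  have hxy : xzero V n0 hn0 ∈ S0 n0 T ↔ yzero V n0 hn0 ∉ S0 n0 T := by
    simp [xzero, yzero]
  have hfgL := xor_pair_sum n0 (S0 n0 T) (xzero V n0 hn0) (yzero V n0 hn0)
    (fun (u : V) (i : Fin (n0+1)) => GPV.L u i) hxy
  have hfgR := xor_pair_sum n0 (S0 n0 T) (xzero V n0 hn0) (yzero V n0 hn0)
    (fun (u : V) (j : Fin (10*n0)) => GPV.R u j) hxy
  simp only [Finset.card_univ, hV, Fintype.card_fin] at hfgL hfgR
  -- controller part
  have hw := w_pair_xor n0 (S0 n0 T) GPV.W (xzero V n0 hn0) (yzero V n0 hn0) hxy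
  -- arithmetic
  have hcard : T.card ≤ n0 := hV ▸ (Finset.card_le_univ T)
  have hsplit : T.card * ((n0+1) * (10*n0)) + (n0 - T.card) * ((n0+1) * (10*n0))
      = n0 * ((n0+1) * (10*n0)) := by
    rw [← Nat.add_mul]
    congr 1
    omega
  have hmm : (100*n0*n0) * (100*n0*n0) = 10000 * n0^4 := by ring
  rw [hsync, hT2, hT3, hcntX, hcntY]
  simp only [Nat.sub_zero, Nat.sub_self, Nat.zero_mul, Nat.add_zero]
  have hz1 : (0:ℕ) ≤ ∑ u : V,
      if GPV.L u ⟨0, Nat.succ_pos n0⟩ ∈ S0 n0 T ∧ (GPV.W : GPV V n0) ∉ S0 n0 T then 1 else 0 :=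
    Nat.zero_le _
  have hz2 : (0:ℕ) ≤ ∑ u : V,
      if (GPV.W : GPV V n0) ∈ S0 n0 T ∧ GPV.L u ⟨0, Nat.succ_pos n0⟩ ∉ S0 n0 T then 1 else 0 :=
    Nat.zero_le _
  linarith [hmm, hsplit, hfgL, hfgR, hw, hz1, hz2]

end QAOA

namespace QAOA

theorem maxcut_decomposition
    (n0 : ℕ) (hn0 : 0 < n0) {V : Type} [Fintype V] [DecidableEq V]
    (hV : Fintype.card V = n0) (G : SimpleGraph V) [DecidableRel G.Adj] :
    ∃ r : ℕ, r ≤ n0 ∧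
      maxCut (Gp n0 G) =
        ((10000 * n0 ^ 4 + n0 * (11 * n0 + 1) + 1) + 10 * n0 ^ 2 * (n0 + 1))
          + (n0 + 1) * maxCut G + r := by
  classical
  set C := ((10000 * n0 ^ 4 + n0 * (11 * n0 + 1) + 1) + 10 * n0 ^ 2 * (n0 + 1))
      + (n0 + 1) * maxCut G with hC
  obtain ⟨T, -, hT⟩ := Finset.exists_mem_eq_sup (Finset.univ : Finset (Finset V))
    ⟨∅, Finset.mem_univ ∅⟩ (fun S => cutSet G S)
  have hlow : C ≤ maxCut (Gp n0 G) := by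
    calc C = ((10000 * n0 ^ 4 + n0 * (11 * n0 + 1) + 1) + 10 * n0 ^ 2 * (n0 + 1))
          + (n0 + 1) * cutSet G T := by rw [hC, maxCut, hT]
      _ ≤ cutSet (Gp n0 G) (S0 n0 T) := cutSet_gp_ge n0 G hn0 hV T
      _ ≤ maxCut (Gp n0 G) := Finset.le_sup (Finset.mem_univ _)
  have hup : maxCut (Gp n0 G) ≤ C + n0 :=
    Finset.sup_le fun S _ => cutSet_gp_le n0 G hn0 hV S
  exact ⟨maxCut (Gp n0 G) - C, by omega, by omega⟩

end QAOA
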